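/- Let θ ∈ [0, 1/2), ε > 0, and let l be a nonnegative integer. Then there exists a constant C = C(θ, ε, l) > 0 with the following property. Suppose λ : ℤ∖{0} → ℂ satisfies |λ(m)| ≤ |m|^{θ + ε/8} for all nonzero integers m, and W : ℝ∖{0} → ℂ satisfies |W(y)| ≤ min(|y|^{1/2 − ε/8}, |y|^{−1/2 − θ − ε/4}) for all nonzero real y. Then for every positive integer n, Σ_{m ∈ ℤ, m ≠ 0} (|λ(m)| / √|m|) · |W(m/n)| · |r_n(m + l)| ≤ C n^{−1/2 + θ + ε}, where r_n(m') := (1/φ(n)) Σ_{1 ≤ a ≤ n, gcd(a,n)=1} e(am'/n) is the normalized Ramanujan sum. -/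

import Mathlib

open Complex Finset

/-- `e(x) = exp(2πix)`. -/
noncomputable def eFn (x : ℝ) : ℂ := Complex.exp (2 * Real.pi * Complex.I * x)

/-- The normalized Ramanujan sum `r_n(m) = (1/φ(n)) Σ_{1 ≤ a ≤ n, gcd(a,n)=1} e(am/n)`. -/
noncomputable def normRamanujanSum (n : ℕ) (m : ℤ) : ℂ :=
  (1 / (Nat.totient n : ℂ)) *
    ∑ a ∈ (Finset.Icc 1 n).filter (fun a => Nat.gcd a n = 1), eFn ((a : ℝ) * (m : ℝ) / (n : ℝ))

open ArithmeticFunction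

lemma eFn_nat_mul (x : ℝ) (b : ℕ) : eFn ((b : ℝ) * x) = (eFn x) ^ b := by
  rw [eFn, eFn, ← Complex.exp_nat_mul]
  push_cast
  ring_nf

lemma eFn_int_eq_one (k : ℤ) : eFn (k : ℝ) = 1 := by
  rw [eFn]
  rw [show ((2:ℂ) * Real.pi * Complex.I * ((k:ℝ):ℂ)) = (k : ℂ) * (2 * Real.pi * Complex.I) by push_cast; ring]
  exact Complex.exp_int_mul_two_pi_mul_I k

lemma geom_lemma (N : ℕ) (hN : 0 < N) (m : ℤ) :
    ∑ b ∈ Finset.Icc 1 N, eFn ((b : ℝ) * (m : ℝ) / (N : ℝ)) =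
      if (N : ℤ) ∣ m then (N : ℂ) else 0 := by
  have hN0 : (N : ℝ) ≠ 0 := Nat.cast_ne_zero.mpr hN.ne'
  set w : ℂ := eFn ((m : ℝ) / N) with hw
  have hterm : ∀ b : ℕ, eFn ((b : ℝ) * (m : ℝ) / (N : ℝ)) = w ^ b := by
    intro b
    rw [hw, ← eFn_nat_mul]
    ring_nf
  have hwN : w ^ N = 1 := by
    rw [hw, ← eFn_nat_mul]
    rw [show (N : ℝ) * ((m:ℝ)/N) = (m : ℝ) by field_simp]
    exact eFn_int_eq_one m
  by_cases hdvd : (N : ℤ) ∣ m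
  · obtain ⟨k, hk⟩ := hdvd
    have hw1 : w = 1 := by
      rw [hw, show (m : ℝ)/N = (k : ℝ) by rw [hk]; push_cast; field_simp]
      exact eFn_int_eq_one k
    rw [if_pos ⟨k, hk⟩]
    simp only [hterm, hw1, one_pow, sum_const, Nat.card_Icc, nsmul_eq_mul, mul_one]
    simp
  · have hw1 : w ≠ 1 := by
      intro h
      rw [hw, eFn] at h
      rw [Complex.exp_eq_one_iff] at h
      obtain ⟨k, hk⟩ := h
      have h2 : (2 * (Real.pi:ℂ) * Complex.I) ≠ 0 := by
        simp [Real.pi_ne_zero, Complex.I_ne_zero]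
      have h3 : (((m:ℝ)/N : ℝ) : ℂ) = (k : ℂ) := by
        apply mul_right_cancel₀ h2
        rw [← hk]; ring
      have h4 : (m : ℝ)/N = (k : ℝ) := by exact_mod_cast h3
      apply hdvd
      refine ⟨k, ?_⟩
      have h5 : (m : ℝ) = (N : ℝ) * (k : ℝ) := by
        field_simp at h4; linarith
      exact_mod_cast h5
    rw [if_neg hdvd]
    calc ∑ b ∈ Finset.Icc 1 N, eFn ((b : ℝ) * (m : ℝ) / (N : ℝ))
        = ∑ b ∈ Finset.Ico 1 (N+1), w ^ b := by
          rw [← Finset.Ico_add_one_right_eq_Icc]; simp only [hterm]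
      _ = ∑ b ∈ Finset.range N, w ^ (1 + b) := by
          rw [Finset.sum_Ico_eq_sum_range]; simp
      _ = w * ∑ b ∈ Finset.range N, w ^ b := by
          rw [Finset.mul_sum]; congr 1; ext b; rw [pow_add, pow_one]
      _ = w * ((w ^ N - 1)/(w - 1)) := by rw [geom_sum_eq hw1]
      _ = 0 := by rw [hwN]; simp

lemma moebius_ind (k : ℕ) :
    (∑ d ∈ k.divisors, ((moebius d : ℤ) : ℂ)) = if k = 1 then 1 else 0 := by
  have h := congrArg (fun f : ArithmeticFunction ℤ => f k) moebius_mul_coe_zeta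
  simp only [coe_mul_zeta_apply, one_apply] at h
  have h2 := congrArg (fun z : ℤ => (z : ℂ)) h
  push_cast at h2
  convert h2 using 2

lemma ramanujan_eq (n : ℕ) (hn : 0 < n) (m : ℤ) :
    ∑ a ∈ (Finset.Icc 1 n).filter (fun a => Nat.gcd a n = 1), eFn ((a:ℝ) * (m:ℝ) / (n:ℝ))
      = ∑ d ∈ n.divisors, ((moebius d : ℤ):ℂ) *
          (if ((n/d : ℕ) : ℤ) ∣ m then ((n/d : ℕ) : ℂ) else 0) := by
  have key : ∑ a ∈ (Finset.Icc 1 n).filter (fun a => Nat.gcd a n = 1), eFn ((a:ℝ) * (m:ℝ) / (n:ℝ))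
      = ∑ a ∈ Finset.Icc 1 n, ∑ d ∈ (Nat.gcd a n).divisors,
          ((moebius d : ℤ):ℂ) * eFn ((a:ℝ) * (m:ℝ) / (n:ℝ)) := by
    rw [Finset.sum_filter]
    refine Finset.sum_congr rfl fun a ha => ?_
    rw [← Finset.sum_mul, moebius_ind]
    split <;> simp
  rw [key]
  have swap : ∑ a ∈ Finset.Icc 1 n, ∑ d ∈ (Nat.gcd a n).divisors,
        ((moebius d : ℤ):ℂ) * eFn ((a:ℝ) * (m:ℝ) / (n:ℝ))
      = ∑ d ∈ n.divisors, ∑ a ∈ (Finset.Icc 1 n).filter (fun a => d ∣ a),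
          ((moebius d : ℤ):ℂ) * eFn ((a:ℝ) * (m:ℝ) / (n:ℝ)) := by
    apply Finset.sum_comm'
    intro a d
    simp only [Nat.mem_divisors, Finset.mem_filter, Finset.mem_Icc]
    constructor
    · rintro ⟨⟨h1, h2⟩, h3, h4⟩
      have hda : d ∣ a := h3.trans (Nat.gcd_dvd_left a n)
      have hdn : d ∣ n := h3.trans (Nat.gcd_dvd_right a n)
      exact ⟨⟨⟨h1, h2⟩, hda⟩, hdn, hn.ne'⟩
    · rintro ⟨⟨⟨h1, h2⟩, hda⟩, hdn, -⟩
      exact ⟨⟨h1, h2⟩, Nat.dvd_gcd hda hdn, Nat.gcd_ne_zero_left (by omega)⟩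
  rw [swap]
  refine Finset.sum_congr rfl fun d hd => ?_
  obtain ⟨hdvd, -⟩ := Nat.mem_divisors.mp hd
  have hd0 : 0 < d := Nat.pos_of_dvd_of_pos hdvd hn
  have hNd : 0 < n / d := Nat.div_pos (Nat.le_of_dvd hn hdvd) hd0
  rw [← geom_lemma (n/d) hNd m, Finset.mul_sum]
  apply Finset.sum_nbij' (fun a => a / d) (fun b => d * b)
  · intro a ha
    simp only [Finset.mem_filter, Finset.mem_Icc] at ha
    obtain ⟨⟨h1, h2⟩, h3⟩ := ha
    simp only [Finset.mem_Icc]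
    constructor
    · exact (Nat.one_le_div_iff hd0).mpr (Nat.le_of_dvd (by omega) h3)
    · exact Nat.div_le_div_right h2
  · intro b hb
    simp only [Finset.mem_Icc] at hb
    simp only [Finset.mem_filter, Finset.mem_Icc]
    refine ⟨⟨by nlinarith [hb.1, hd0], ?_⟩, Dvd.intro b rfl⟩
    calc d * b ≤ d * (n / d) := Nat.mul_le_mul_left d hb.2
      _ = n := Nat.mul_div_cancel' hdvd
  · intro a ha
    simp only [Finset.mem_filter] at ha
    exact Nat.mul_div_cancel' ha.2
  · intro b hb
    exact Nat.mul_div_cancel_left b hd0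
  · intro a ha
    simp only [Finset.mem_filter, Finset.mem_Icc] at ha
    have hda := ha.2
    have hcast : ((n / d : ℕ) : ℝ) = (n : ℝ) / d := Nat.cast_div hdvd (by positivity)
    have hcast2 : ((a / d : ℕ) : ℝ) = (a : ℝ) / d := Nat.cast_div hda (by positivity)
    have hn0 : (n : ℝ) ≠ 0 := by positivity
    have hdr : (d : ℝ) ≠ 0 := by positivity
    have harg : (a:ℝ) * (m:ℝ) / (n:ℝ) = ((a / d : ℕ):ℝ) * (m:ℝ) / ((n / d : ℕ):ℝ) := by
      rw [hcast, hcast2]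
      obtain ⟨c, hc⟩ := hda
      subst hc
      field_simp
    rw [harg]

lemma ramanujan_bound (n : ℕ) (hn : 0 < n) (m : ℤ) :
    ‖normRamanujanSum n m‖ ≤
      (∑ g ∈ n.divisors, if (g:ℤ) ∣ m then (g:ℝ) else 0) / (Nat.totient n : ℝ) := by
  have hφ : (0:ℝ) < (Nat.totient n : ℝ) := by
    exact_mod_cast Nat.totient_pos.mpr hn
  rw [normRamanujanSum, ramanujan_eq n hn m]
  rw [norm_mul, norm_div, norm_one, Complex.norm_natCast, div_mul_eq_mul_div, one_mul]
  gcongr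
  calc ‖∑ d ∈ n.divisors, ((moebius d : ℤ):ℂ) *
          (if ((n/d : ℕ) : ℤ) ∣ m then ((n/d : ℕ) : ℂ) else 0)‖
        ≤ ∑ d ∈ n.divisors, ‖((moebius d : ℤ):ℂ) *
          (if ((n/d : ℕ) : ℤ) ∣ m then ((n/d : ℕ) : ℂ) else 0)‖ := norm_sum_le _ _
      _ ≤ ∑ d ∈ n.divisors, (if ((n/d : ℕ) : ℤ) ∣ m then ((n/d : ℕ) : ℝ) else 0) := by
          apply Finset.sum_le_sum
          intro d hd
          rw [norm_mul]
          have h1 : ‖((moebius d : ℤ):ℂ)‖ ≤ 1 := by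
            rw [Complex.norm_intCast]
            exact_mod_cast abs_moebius_le_one
          have h2 : ‖(if ((n/d : ℕ) : ℤ) ∣ m then ((n/d : ℕ) : ℂ) else 0)‖
              = (if ((n/d : ℕ) : ℤ) ∣ m then ((n/d : ℕ) : ℝ) else 0) := by
            split <;> simp
          rw [h2]
          split
          · calc _ ≤ 1 * ((n/d : ℕ) : ℝ) := by
                  apply mul_le_mul_of_nonneg_right h1 (by positivity)
              _ = _ := one_mul _
          · simp
      _ = ∑ g ∈ n.divisors, (if (g : ℤ) ∣ m then (g : ℝ) else 0) :=
          Nat.sum_div_divisors n (fun g => if (g : ℤ) ∣ m then (g : ℝ) else 0)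

lemma n_le_phi_mul_tau (n : ℕ) (hn : 0 < n) : n ≤ n.totient * n.divisors.card := by
  have key := Nat.totient_mul_prod_primeFactors n
  have h1 : (∏ p ∈ n.primeFactors, p) ≤ ∏ p ∈ n.primeFactors, 2 * (p - 1) := by
    apply Finset.prod_le_prod'
    intro p hp
    have := (Nat.prime_of_mem_primeFactors hp).two_le
    omega
  have h2 : (∏ p ∈ n.primeFactors, 2 * (p-1))
      = 2 ^ n.primeFactors.card * ∏ p ∈ n.primeFactors, (p-1) := by
    rw [Finset.prod_mul_distrib, Finset.prod_const]
  have h3 : 2 ^ n.primeFactors.card ≤ n.divisors.card := by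
    rw [Nat.card_divisors hn.ne']
    calc 2 ^ n.primeFactors.card = ∏ _p ∈ n.primeFactors, 2 := (Finset.prod_const 2).symm
      _ ≤ _ := by
          apply Finset.prod_le_prod'
          intro p hp
          have : n.factorization p ≠ 0 := by
            rw [← Finsupp.mem_support_iff, Nat.support_factorization]
            exact hp
          omega
  have hPpos : 0 < ∏ p ∈ n.primeFactors, (p - 1) :=
    Finset.prod_pos fun p hp => by
      have := (Nat.prime_of_mem_primeFactors hp).two_le; omega
  have hfin : n * ∏ p ∈ n.primeFactors, (p-1)
      ≤ (n.totient * n.divisors.card) * ∏ p ∈ n.primeFactors, (p-1) := by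
    calc n * ∏ p ∈ n.primeFactors, (p-1) = n.totient * ∏ p ∈ n.primeFactors, p := key.symm
      _ ≤ n.totient * (2 ^ n.primeFactors.card * ∏ p ∈ n.primeFactors, (p-1)) :=
          Nat.mul_le_mul_left _ (h1.trans_eq h2)
      _ ≤ n.totient * (n.divisors.card * ∏ p ∈ n.primeFactors, (p-1)) :=
          Nat.mul_le_mul_left _ (Nat.mul_le_mul_right _ h3)
      _ = (n.totient * n.divisors.card) * ∏ p ∈ n.primeFactors, (p-1) := by ring
  exact Nat.le_of_mul_le_mul_right hfin hPpos

lemma tau_rpow_bound (δ : ℝ) (hδ : 0 < δ) :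
    ∃ C : ℝ, 1 ≤ C ∧ ∀ n : ℕ, 0 < n → ((n.divisors.card : ℝ)) ≤ C * (n : ℝ) ^ δ := by
  obtain ⟨M, hM⟩ := exists_nat_ge ((2:ℝ) ^ ((1:ℝ)/δ))
  set B : ℝ := max 1 (1 / (δ * Real.log 2)) with hB
  have hB1 : (1:ℝ) ≤ B := le_max_left _ _
  have hlog2 : (0:ℝ) < Real.log 2 := Real.log_pos (by norm_num)
  refine ⟨B ^ M, one_le_pow₀ hB1, fun n hn => ?_⟩
  have claim : ∀ p ∈ n.primeFactors,
      ((n.factorization p + 1 : ℕ) : ℝ) ≤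
        (if p < M then B else 1) * (((p : ℝ) ^ (n.factorization p : ℕ)) ^ δ) := by
    intro p hp
    have hprime := Nat.prime_of_mem_primeFactors hp
    have hp2 : (2:ℝ) ≤ (p:ℝ) := by exact_mod_cast hprime.two_le
    set k := n.factorization p with hk
    have hx0 : (0:ℝ) < (p:ℝ) := by linarith
    have hrw : (((p : ℝ) ^ (k:ℕ)) ^ δ) = ((p:ℝ) ^ δ) ^ (k : ℕ) := by
      rw [← Real.rpow_natCast (p:ℝ) k, ← Real.rpow_mul hx0.le, mul_comm,
        Real.rpow_mul hx0.le, Real.rpow_natCast]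
    rw [hrw]
    have hk21 : ((k + 1 : ℕ) : ℝ) ≤ (2:ℝ) ^ (k:ℕ) := by
      have h := (Nat.lt_two_pow_self : k < 2 ^ k)
      have : (k + 1 : ℕ) ≤ 2 ^ k := Nat.succ_le_of_lt h
      exact_mod_cast this
    by_cases hpM : p < M
    · rw [if_pos hpM]
      have hB2 : 1 / (δ * Real.log 2) ≤ B := le_max_right _ _
      have hBd : 1 ≤ B * (δ * Real.log 2) := by
        rw [div_le_iff₀ (by positivity)] at hB2
        linarith
      have e1 : (2:ℝ) ^ δ ≤ (p:ℝ) ^ δ := Real.rpow_le_rpow (by norm_num) hp2 hδ.le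
      have e2 : ((2:ℝ) ^ δ) ^ (k:ℕ) ≤ ((p:ℝ) ^ δ) ^ (k:ℕ) :=
        pow_le_pow_left₀ (by positivity) e1 k
      have e3 : (1 + Real.log 2 * δ * (k:ℝ)) ≤ ((2:ℝ)^δ)^(k:ℕ) := by
        rw [Real.rpow_def_of_pos (by norm_num : (0:ℝ) < 2), ← Real.exp_nat_mul]
        have h := Real.add_one_le_exp ((k:ℝ) * (Real.log 2 * δ))
        calc 1 + Real.log 2 * δ * (k:ℝ) = (k:ℝ) * (Real.log 2 * δ) + 1 := by ring
          _ ≤ _ := h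
      have hk0 : (0:ℝ) ≤ (k:ℝ) := Nat.cast_nonneg k
      have e4 : B * (1 + Real.log 2 * δ * (k:ℝ)) ≤ B * (((p:ℝ) ^ δ) ^ (k:ℕ)) := by
        apply mul_le_mul_of_nonneg_left (e3.trans e2) (by linarith)
      have e5 : ((k + 1 : ℕ) : ℝ) ≤ B * (1 + Real.log 2 * δ * (k:ℝ)) := by
        push_cast
        nlinarith [mul_nonneg (sub_nonneg.mpr hBd) hk0]
      linarith
    · rw [if_neg hpM, one_mul]
      have hpM' : (M:ℝ) ≤ (p:ℝ) := by exact_mod_cast Nat.le_of_not_lt hpM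
      have hpd : (2:ℝ) ≤ (p:ℝ) ^ δ := by
        calc (2:ℝ) = ((2:ℝ) ^ ((1:ℝ)/δ)) ^ δ := by
              rw [← Real.rpow_mul (by norm_num), one_div, inv_mul_cancel₀ hδ.ne', Real.rpow_one]
          _ ≤ (p:ℝ) ^ δ := Real.rpow_le_rpow (by positivity) (hM.trans hpM') hδ.le
      calc ((k + 1 : ℕ) : ℝ) ≤ (2:ℝ) ^ (k:ℕ) := hk21
        _ ≤ ((p:ℝ) ^ δ) ^ (k:ℕ) := pow_le_pow_left₀ (by norm_num) hpd k
  have hτ : ((n.divisors.card : ℝ)) = ∏ p ∈ n.primeFactors, ((n.factorization p + 1 : ℕ) : ℝ) := by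
    rw [Nat.card_divisors hn.ne']
    push_cast
    rfl
  have hnn : (n:ℝ) = ∏ p ∈ n.primeFactors, ((p:ℝ) ^ (n.factorization p : ℕ)) := by
    have h := Nat.factorization_prod_pow_eq_self hn.ne'
    rw [Finsupp.prod, Nat.support_factorization] at h
    exact_mod_cast (congrArg (fun x : ℕ => (x : ℝ)) h).symm
  calc ((n.divisors.card : ℝ))
      = ∏ p ∈ n.primeFactors, ((n.factorization p + 1 : ℕ) : ℝ) := hτ
    _ ≤ ∏ p ∈ n.primeFactors,
          ((if p < M then B else 1) * (((p : ℝ) ^ (n.factorization p : ℕ)) ^ δ)) := by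
        apply Finset.prod_le_prod (fun p _ => by positivity) claim
    _ = (∏ p ∈ n.primeFactors, (if p < M then B else 1)) *
          ∏ p ∈ n.primeFactors, (((p : ℝ) ^ (n.factorization p : ℕ)) ^ δ) :=
        Finset.prod_mul_distrib
    _ ≤ B ^ M * (n:ℝ) ^ δ := by
        have hc1 : (∏ p ∈ n.primeFactors, (if p < M then B else 1)) ≤ B ^ M := by
          rw [Finset.prod_ite]
          simp only [Finset.prod_const, one_pow, mul_one]
          have hsub : (n.primeFactors.filter (fun p => p < M)) ⊆ Finset.range M := by
            intro p hp
            simp only [Finset.mem_filter] at hp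
            exact Finset.mem_range.mpr hp.2
          have hcard : (n.primeFactors.filter (fun p => p < M)).card ≤ M := by
            simpa using Finset.card_le_card hsub
          exact pow_le_pow_right₀ hB1 hcard
        have hc2 : (∏ p ∈ n.primeFactors, (((p : ℝ) ^ (n.factorization p : ℕ)) ^ δ))
            = (n:ℝ) ^ δ := by
          rw [Real.finset_prod_rpow _ _ (fun p _ => by positivity), ← hnn]
        rw [hc2]
        apply mul_le_mul_of_nonneg_right hc1 (by positivity)

lemma mid_bound (l n g : ℕ) (hg : 0 < g) (hgn : g ≤ n) :
    Summable (fun k : ℤ => if ((g:ℤ)*k - l ≠ 0 ∧ |(g:ℤ)*k - (l:ℤ)| ≤ (n:ℤ)) then (1:ℝ) else 0) ∧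
    (∑' k : ℤ, (if ((g:ℤ)*k - l ≠ 0 ∧ |(g:ℤ)*k - (l:ℤ)| ≤ (n:ℤ)) then (1:ℝ) else 0))
      ≤ (2*(l:ℝ)+3) * n / g := by
  have hn : 0 < n := lt_of_lt_of_le hg hgn
  set K : ℕ := (n + l)/g with hK
  have hsupp : ∀ k : ℤ, k ∉ Finset.Icc (-(K:ℤ)) (K:ℤ) →
      (if ((g:ℤ)*k - l ≠ 0 ∧ |(g:ℤ)*k - (l:ℤ)| ≤ (n:ℤ)) then (1:ℝ) else 0) = 0 := by
    intro k hk
    rw [if_neg]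
    rintro ⟨-, habs⟩
    apply hk
    have h1 : |(g:ℤ)*k| ≤ (n:ℤ) + l := by
      have := abs_sub_abs_le_abs_sub ((g:ℤ)*k) (l:ℤ)
      have hl : |(l:ℤ)| = (l:ℤ) := abs_of_nonneg (by positivity)
      omega
    have h2 : (g:ℤ) * |k| ≤ (n:ℤ) + l := by
      rwa [abs_mul, abs_of_nonneg (by positivity : (0:ℤ) ≤ (g:ℤ))] at h1
    have h3 : g * k.natAbs ≤ n + l := by
      have h2' : (g:ℤ) * (k.natAbs : ℤ) ≤ (n:ℤ) + l := by
        rwa [Int.abs_eq_natAbs] at h2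
      exact_mod_cast h2'
    have h4 : k.natAbs ≤ K := by
      rw [hK, Nat.le_div_iff_mul_le hg, mul_comm]
      exact h3
    have h5 : |k| ≤ (K:ℤ) := by
      rw [Int.abs_eq_natAbs]
      exact_mod_cast h4
    rw [Finset.mem_Icc]
    omega
  constructor
  · exact summable_of_ne_finset_zero hsupp
  · rw [tsum_eq_sum hsupp]
    have hcard : ((Finset.Icc (-(K:ℤ)) (K:ℤ)).card : ℝ) = 2*(K:ℝ)+1 := by
      rw [Int.card_Icc]
      have : ((K:ℤ) + 1 - -(K:ℤ)).toNat = 2*K+1 := by omega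
      rw [this]
      push_cast
      ring
    have hsum : ∑ k ∈ Finset.Icc (-(K:ℤ)) (K:ℤ),
        (if ((g:ℤ)*k - l ≠ 0 ∧ |(g:ℤ)*k - (l:ℤ)| ≤ (n:ℤ)) then (1:ℝ) else 0)
        ≤ 2*(K:ℝ)+1 := by
      rw [← hcard]
      calc _ ≤ ∑ _k ∈ Finset.Icc (-(K:ℤ)) (K:ℤ), (1:ℝ) := by
            apply Finset.sum_le_sum
            intro k _
            split <;> norm_num
        _ = _ := by rw [Finset.sum_const, nsmul_eq_mul, mul_one]
    have hKle : (K:ℝ) ≤ ((n:ℝ)+l)/g := by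
      rw [hK]
      push_cast [← Nat.cast_add]
      exact_mod_cast Nat.cast_div_le
    have hg' : (0:ℝ) < g := by positivity
    have hfin : 2*(((n:ℝ)+l)/g)+1 ≤ (2*(l:ℝ)+3) * n / g := by
      have h1 : (1:ℝ) ≤ n := by exact_mod_cast hn
      have h2 : (g:ℝ) ≤ n := by exact_mod_cast hgn
      have h3 : (0:ℝ) ≤ l := by positivity
      rw [mul_div_assoc, ← sub_nonneg]
      have key : (2 * (l:ℝ) + 3) * ((n:ℝ)/g) - (2 * (((n:ℝ) + l)/g) + 1)
          = (((2*(l:ℝ)+3)*n - 2*((n:ℝ)+l) - g))/g := by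
        field_simp
        ring
      rw [key]
      apply div_nonneg _ hg'.le
      nlinarith
    calc _ ≤ 2*(K:ℝ)+1 := hsum
      _ ≤ 2*(((n:ℝ)+l)/g)+1 := by linarith
      _ ≤ _ := hfin

lemma tail_bound_explicit (δ : ℝ) (hδ0 : 0 < δ) (hδ1 : δ ≤ 1) (l : ℕ) :
    ∃ Z : ℝ, 0 < Z ∧ ∀ (n g : ℕ), 0 < g → g ≤ n →
      Summable (fun k : ℤ => if ((g:ℤ)*k - l ≠ 0 ∧ (n:ℤ) < |(g:ℤ)*k - (l:ℤ)|) then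
          |(((g:ℤ)*k - (l:ℤ) : ℤ) : ℝ)| ^ (-(1+δ)) else 0) ∧
      (∑' k : ℤ, (if ((g:ℤ)*k - l ≠ 0 ∧ (n:ℤ) < |(g:ℤ)*k - (l:ℤ)|) then
          |(((g:ℤ)*k - (l:ℤ) : ℤ) : ℝ)| ^ (-(1+δ)) else 0))
        ≤ (4 * (∑' k : ℤ, |(k:ℝ)| ^ (-(1+δ))) + (4*(l:ℝ)+3)) / g := by
  have hsum0 : Summable (fun k : ℤ => |(k:ℝ)| ^ (-(1+δ))) :=
    Real.summable_abs_int_rpow (by linarith)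
  set Z₀ : ℝ := ∑' k : ℤ, |(k:ℝ)| ^ (-(1+δ)) with hZ₀
  have hZ₀0 : 0 ≤ Z₀ := tsum_nonneg (fun k => Real.rpow_nonneg (abs_nonneg _) _)
  refine ⟨4*Z₀ + (4*(l:ℝ)+3), by positivity, fun n g hg hgn => ?_⟩
  have hn : 0 < n := lt_of_lt_of_le hg hgn
  have hg' : (0:ℝ) < g := by positivity
  have hg1 : (1:ℝ) ≤ g := by exact_mod_cast hg
  set e : ℤ → ℝ := fun k => if |k| ≤ (2*(l:ℤ)+1) then (1:ℝ) else 0 with he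
  have hesupp : ∀ k : ℤ, k ∉ Finset.Icc (-(2*(l:ℤ)+1)) (2*(l:ℤ)+1) → e k = 0 := by
    intro k hk
    rw [Finset.mem_Icc] at hk
    rw [he]
    simp only
    rw [if_neg]
    rw [abs_le]
    exact hk
  have hesummable : Summable e := summable_of_ne_finset_zero hesupp
  have hesum : (∑' k : ℤ, e k) = 4*(l:ℝ)+3 := by
    rw [tsum_eq_sum hesupp]
    have : ∀ k ∈ Finset.Icc (-(2*(l:ℤ)+1)) (2*(l:ℤ)+1), e k = 1 := by
      intro k hk
      rw [Finset.mem_Icc] at hk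
      rw [he]
      simp only
      rw [if_pos (abs_le.mpr hk)]
    rw [Finset.sum_congr rfl this, Finset.sum_const, Int.card_Icc, nsmul_eq_mul, mul_one]
    have : ((2*(l:ℤ)+1) + 1 - -(2*(l:ℤ)+1)).toNat = 4*l+3 := by omega
    rw [this]
    push_cast
    ring
  set D : ℤ → ℝ := fun k => (4/g) * |(k:ℝ)| ^ (-(1+δ)) + (1/g) * e k with hD
  have hDsummable : Summable D := (hsum0.mul_left _).add (hesummable.mul_left _)
  have hpoint : ∀ k : ℤ, (if ((g:ℤ)*k - l ≠ 0 ∧ (n:ℤ) < |(g:ℤ)*k - (l:ℤ)|) then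
      |(((g:ℤ)*k - (l:ℤ) : ℤ) : ℝ)| ^ (-(1+δ)) else 0) ≤ D k := by
    intro k
    have he0 : (0:ℝ) ≤ e k := by rw [he]; simp only; split <;> norm_num
    have hD0 : 0 ≤ D k := by
      rw [hD]
      simp only
      have h1 : (0:ℝ) ≤ |(k:ℝ)| ^ (-(1+δ)) := Real.rpow_nonneg (abs_nonneg _) _
      positivity
    split
    case isFalse => exact hD0
    case isTrue h =>
      obtain ⟨hm0, hmn⟩ := h
      set m : ℤ := (g:ℤ)*k - l with hm
      set x : ℝ := |((m:ℤ):ℝ)| with hx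
      have hxeq : x = ((|m| : ℤ) : ℝ) := by rw [hx, Int.cast_abs]
      have hgx : (g:ℝ) ≤ x := by
        rw [hxeq]
        have h1 : (g:ℤ) ≤ |m| := by omega
        exact_mod_cast h1
      have hx1 : (1:ℝ) ≤ x := le_trans hg1 hgx
      have hc0 : (-(1+δ)) ≤ 0 := by linarith
      have hcm1 : (-(1+δ)) ≤ -1 := by linarith
      by_cases hk2 : |k| ≤ (2*(l:ℤ)+1)
      · have step1 : x ^ (-(1+δ)) ≤ x ^ (-(1:ℝ)) :=
          Real.rpow_le_rpow_of_exponent_le hx1 hcm1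
        have step2 : x ^ (-(1:ℝ)) = x⁻¹ := Real.rpow_neg_one x
        have step3 : x⁻¹ ≤ (g:ℝ)⁻¹ := by
          apply inv_anti₀ hg' hgx
        have hDk : D k = (4/g) * |(k:ℝ)| ^ (-(1+δ)) + (1/g) := by
          rw [hD]
          simp only
          rw [he]
          simp only
          rw [if_pos hk2, mul_one]
        rw [hDk]
        have h4 : (0:ℝ) ≤ (4/g) * |(k:ℝ)| ^ (-(1+δ)) := by
          have := Real.rpow_nonneg (abs_nonneg ((k:ℝ))) (-(1+δ))
          positivity
        have : x ^ (-(1+δ)) ≤ (1:ℝ)/g := by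
          rw [one_div]
          linarith [step1, step3, step2 ▸ step1]
        linarith
      · -- |k| ≥ 2l+2
        set xk : ℝ := |(k:ℝ)| with hxk
        have hxkeq : xk = ((|k| : ℤ) : ℝ) := by rw [hxk, Int.cast_abs]
        have hk3 : (2*(l:ℤ)+2) ≤ |k| := by omega
        have hxk2 : (2:ℝ) ≤ xk := by
          rw [hxkeq]
          have : (2:ℤ) ≤ |k| := by omega
          exact_mod_cast this
        have hxk0 : (0:ℝ) < xk := by linarith
        -- 2|m| ≥ g|k|
        have key : (g:ℤ)*|k| ≤ 2*|m| := by
          have e1 : |(g:ℤ)*k| = (g:ℤ)*|k| := by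
            rw [abs_mul, abs_of_nonneg (by positivity : (0:ℤ) ≤ (g:ℤ))]
          have e2 : |k| ≤ (g:ℤ)*|k| := le_mul_of_one_le_left (abs_nonneg k) (by exact_mod_cast hg)
          have e3 : |(g:ℤ)*k| - |(l:ℤ)| ≤ |m| := by
            rw [hm]
            exact abs_sub_abs_le_abs_sub _ _
          have e4 : |(l:ℤ)| = (l:ℤ) := abs_of_nonneg (by positivity)
          omega
        have keyR : (g:ℝ) * xk / 2 ≤ x := by
          rw [hxeq, hxkeq]
          have : ((g:ℤ)*|k| : ℤ) ≤ ((2*|m| : ℤ) : ℤ) := key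
          have h5 : ((g:ℤ)*|k| : ℝ) ≤ 2*((|m|:ℤ):ℝ) := by exact_mod_cast this
          push_cast at h5 ⊢
          linarith
        have hgxk : (0:ℝ) < (g:ℝ) * xk / 2 := by positivity
        have step1 : x ^ (-(1+δ)) ≤ ((g:ℝ) * xk / 2) ^ (-(1+δ)) :=
          Real.rpow_le_rpow_of_nonpos hgxk keyR hc0
        have step2 : ((g:ℝ) * xk / 2) ^ (-(1+δ))
            = ((g:ℝ) ^ (-(1+δ))) * (xk ^ (-(1+δ))) * ((2:ℝ) ^ (1+δ)) := by
          rw [Real.div_rpow (by positivity) (by norm_num), Real.mul_rpow hg'.le hxk0.le]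
          rw [div_eq_mul_inv, ← Real.rpow_neg (by norm_num : (0:ℝ) ≤ 2), neg_neg]
        have step3 : ((g:ℝ) ^ (-(1+δ))) ≤ (g:ℝ)⁻¹ := by
          calc ((g:ℝ) ^ (-(1+δ))) ≤ (g:ℝ) ^ (-(1:ℝ)) :=
              Real.rpow_le_rpow_of_exponent_le hg1 hcm1
            _ = (g:ℝ)⁻¹ := Real.rpow_neg_one _
        have step4 : ((2:ℝ) ^ (1+δ)) ≤ 4 := by
          calc ((2:ℝ) ^ (1+δ)) ≤ (2:ℝ) ^ (2:ℝ) :=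
              Real.rpow_le_rpow_of_exponent_le (by norm_num) (by linarith)
            _ = 4 := by
              rw [show (2:ℝ) = ((2:ℕ):ℝ) by norm_num, Real.rpow_natCast]
              norm_num
        have hxkc : (0:ℝ) ≤ xk ^ (-(1+δ)) := Real.rpow_nonneg hxk0.le _
        have step5 : ((g:ℝ) ^ (-(1+δ))) * (xk ^ (-(1+δ))) * ((2:ℝ) ^ (1+δ))
            ≤ ((g:ℝ)⁻¹) * (xk ^ (-(1+δ))) * 4 := by
          apply mul_le_mul
          · exact mul_le_mul_of_nonneg_right step3 hxkc
          · exact step4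
          · positivity
          · positivity
        have hfin : x ^ (-(1+δ)) ≤ (4/g) * (xk ^ (-(1+δ))) := by
          calc x ^ (-(1+δ)) ≤ ((g:ℝ) ^ (-(1+δ))) * (xk ^ (-(1+δ))) * ((2:ℝ) ^ (1+δ)) :=
              step1.trans_eq step2
            _ ≤ ((g:ℝ)⁻¹) * (xk ^ (-(1+δ))) * 4 := step5
            _ = (4/g) * (xk ^ (-(1+δ))) := by ring
        rw [hD]
        simp only
        have : (0:ℝ) ≤ (1/g) * e k := by positivity
        rw [← hxk]
        linarith
  constructor
  · apply Summable.of_nonneg_of_le _ hpoint hDsummable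
    intro k
    split
    · exact Real.rpow_nonneg (abs_nonneg _) _
    · exact le_rfl
  · calc (∑' k : ℤ, (if ((g:ℤ)*k - l ≠ 0 ∧ (n:ℤ) < |(g:ℤ)*k - (l:ℤ)|) then
          |(((g:ℤ)*k - (l:ℤ) : ℤ) : ℝ)| ^ (-(1+δ)) else 0))
        ≤ ∑' k : ℤ, D k := by
          apply Summable.tsum_le_tsum hpoint _ hDsummable
          apply Summable.of_nonneg_of_le _ hpoint hDsummable
          intro k
          split
          · exact Real.rpow_nonneg (abs_nonneg _) _
          · exact le_rfl
      _ = (4/g) * Z₀ + (1/g) * (4*(l:ℝ)+3) := by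
          rw [hD]
          rw [Summable.tsum_add (hsum0.mul_left _) (hesummable.mul_left _), tsum_mul_left, tsum_mul_left,
            hesum]
      _ = (4 * Z₀ + (4*(l:ℝ)+3)) / g := by ring

lemma tail_bound (δ : ℝ) (hδ0 : 0 < δ) (hδ1 : δ ≤ 1) (l : ℕ) :
    ∃ Z : ℝ, 0 < Z ∧ ∀ (n g : ℕ), 0 < g → g ≤ n →
      Summable (fun k : ℤ => if ((g:ℤ)*k - l ≠ 0 ∧ (n:ℤ) < |(g:ℤ)*k - (l:ℤ)|) then
          |(((g:ℤ)*k - (l:ℤ) : ℤ) : ℝ)| ^ (-(1+δ)) else 0) ∧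
      (∑' k : ℤ, (if ((g:ℤ)*k - l ≠ 0 ∧ (n:ℤ) < |(g:ℤ)*k - (l:ℤ)|) then
          |(((g:ℤ)*k - (l:ℤ) : ℤ) : ℝ)| ^ (-(1+δ)) else 0)) ≤ Z / g := by
  obtain ⟨-, -, h⟩ := tail_bound_explicit δ hδ0 hδ1 l
  refine ⟨4 * (∑' k : ℤ, |(k:ℝ)| ^ (-(1+δ))) + (4*(l:ℝ)+3), ?_, h⟩
  have hZ₀0 : 0 ≤ (∑' k : ℤ, |(k:ℝ)| ^ (-(1+δ))) :=
    tsum_nonneg (fun k => Real.rpow_nonneg (abs_nonneg _) _)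
  positivity

theorem key_analytic_estimate
    (θ ε : ℝ) (hθ : 0 ≤ θ) (hθ' : θ < 1/2) (hε : 0 < ε) (l : ℕ) :
    ∃ C : ℝ, 0 < C ∧
      ∀ (lam : ℤ → ℂ) (W : ℝ → ℂ),
        (∀ m : ℤ, m ≠ 0 → ‖lam m‖ ≤ (|m| : ℝ) ^ (θ + ε/8)) →
        (∀ y : ℝ, y ≠ 0 →
          ‖W y‖ ≤ min (|y| ^ ((1:ℝ)/2 - ε/8)) (|y| ^ (-(1:ℝ)/2 - θ - ε/4))) →
        ∀ (n : ℕ), 0 < n →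
          Summable (fun m : ℤ => if m = 0 then (0:ℝ) else
            (‖lam m‖ / Real.sqrt (|m| : ℝ)) * ‖W ((m : ℝ) / (n : ℝ))‖ *
              ‖normRamanujanSum n (m + l)‖) ∧
          (∑' m : ℤ, if m = 0 then (0:ℝ) else
            (‖lam m‖ / Real.sqrt (|m| : ℝ)) * ‖W ((m : ℝ) / (n : ℝ))‖ *
              ‖normRamanujanSum n (m + l)‖) ≤ C * (n : ℝ) ^ (-(1:ℝ)/2 + θ + ε) := by
  set δ : ℝ := min (ε/8) 1 with hδ
  have hδ0 : 0 < δ := lt_min (by positivity) one_pos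
  have hδ1 : δ ≤ 1 := min_le_right _ _
  have hδε : δ ≤ ε/8 := min_le_left _ _
  obtain ⟨Cτ, hCτ1, hCτ⟩ := tau_rpow_bound (3*ε/8) (by positivity)
  obtain ⟨Z, hZ0, hZ⟩ := tail_bound δ hδ0 hδ1 l
  refine ⟨Cτ^2 * ((2*(l:ℝ)+3) + Z), by positivity, fun lam W hlam hW n hn => ?_⟩
  set ν : ℝ := (n : ℝ) with hν
  have hν0 : (0:ℝ) < ν := by positivity
  have hν1 : (1:ℝ) ≤ ν := by
    rw [hν]
    exact_mod_cast hn
  set φ : ℕ := n.totient with hφ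
  have hφ0 : 0 < φ := Nat.totient_pos.mpr hn
  have hφ0' : (0:ℝ) < (φ:ℝ) := by exact_mod_cast hφ0
  set τ : ℕ := n.divisors.card with hτ
  have hτ0 : (0:ℝ) ≤ (τ:ℝ) := by positivity
  -- the main summand
  set T : ℤ → ℝ := fun m => if m = 0 then (0:ℝ) else
      (‖lam m‖ / Real.sqrt (|m| : ℝ)) * ‖W ((m : ℝ) / (n : ℝ))‖ *
        ‖normRamanujanSum n (m + l)‖ with hT
  have hT0 : ∀ m, 0 ≤ T m := by
    intro m
    rw [hT]
    simp only
    split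
    · exact le_rfl
    · positivity
  -- the majorant pieces
  set U : ℤ → ℝ := fun m => min (ν^(ε/8-1/2) * |(m:ℝ)|^θ) (ν^(1/2+θ+ε/4) * |(m:ℝ)|^(-(1+δ))) with hU
  have hU0 : ∀ m, 0 ≤ U m := by
    intro m
    apply le_min
    · have := Real.rpow_nonneg (abs_nonneg ((m:ℝ))) θ
      positivity
    · have := Real.rpow_nonneg (abs_nonneg ((m:ℝ))) (-(1+δ))
      positivity
  -- pointwise bound of the lam·W part
  have hTU : ∀ m : ℤ, m ≠ 0 →
      (‖lam m‖ / Real.sqrt (|m| : ℝ)) * ‖W ((m : ℝ) / (n : ℝ))‖ ≤ U m := by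
    intro m hm
    set x : ℝ := |(m:ℝ)| with hx
    have hx1 : (1:ℝ) ≤ x := by
      have h1 : (1:ℤ) ≤ |m| := Int.one_le_abs hm
      have h2 : (1:ℝ) ≤ ((|m|:ℤ):ℝ) := by exact_mod_cast h1
      rwa [Int.cast_abs] at h2
    have hx0 : (0:ℝ) < x := lt_of_lt_of_le one_pos hx1
    have hy0 : (m : ℝ) / (n : ℝ) ≠ 0 := by
      apply div_ne_zero
      · exact_mod_cast hm
      · exact hν0.ne'
    have hyabs : |(m : ℝ) / (n : ℝ)| = x / ν := by
      rw [abs_div, abs_of_pos hν0]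
    have hfrac : ‖lam m‖ / Real.sqrt x ≤ x ^ (θ + ε/8 - 1/2) := by
      rw [Real.sqrt_eq_rpow, Real.rpow_sub hx0]
      gcongr
      exact hlam m hm
    have hWb := hW _ hy0
    rw [hyabs] at hWb
    have hmain : (‖lam m‖ / Real.sqrt x) * ‖W ((m : ℝ) / (n : ℝ))‖
        ≤ x ^ (θ + ε/8 - 1/2) * min ((x/ν) ^ ((1:ℝ)/2 - ε/8)) ((x/ν) ^ (-(1:ℝ)/2 - θ - ε/4)) :=
      mul_le_mul hfrac hWb (norm_nonneg _) (Real.rpow_nonneg hx0.le _)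
    have e1 : x ^ (θ + ε/8 - 1/2) * ((x/ν) ^ ((1:ℝ)/2 - ε/8)) = ν^(ε/8-1/2) * x^θ := by
      rw [Real.div_rpow hx0.le hν0.le]
      calc x ^ (θ + ε/8 - 1/2) * (x ^ ((1:ℝ)/2 - ε/8) / ν ^ ((1:ℝ)/2 - ε/8))
          = (x ^ (θ + ε/8 - 1/2) * x ^ ((1:ℝ)/2 - ε/8)) * (ν ^ ((1:ℝ)/2 - ε/8))⁻¹ := by ring
        _ = x ^ θ * (ν ^ ((1:ℝ)/2 - ε/8))⁻¹ := by
            rw [← Real.rpow_add hx0, show θ + ε/8 - 1/2 + ((1:ℝ)/2 - ε/8) = θ by ring]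
        _ = ν^(ε/8-1/2) * x^θ := by
            rw [show ε/8-(1:ℝ)/2 = -((1:ℝ)/2 - ε/8) by ring, Real.rpow_neg hν0.le]
            ring
    have e2 : x ^ (θ + ε/8 - 1/2) * ((x/ν) ^ (-(1:ℝ)/2 - θ - ε/4))
        = ν^(1/2+θ+ε/4) * x^(-(1+ε/8)) := by
      rw [Real.div_rpow hx0.le hν0.le]
      calc x ^ (θ + ε/8 - 1/2) * (x ^ (-(1:ℝ)/2 - θ - ε/4) / ν ^ (-(1:ℝ)/2 - θ - ε/4))
          = (x ^ (θ + ε/8 - 1/2) * x ^ (-(1:ℝ)/2 - θ - ε/4)) * (ν ^ (-(1:ℝ)/2 - θ - ε/4))⁻¹ := by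
            ring
        _ = x ^ (-(1+ε/8)) * (ν ^ (-(1:ℝ)/2 - θ - ε/4))⁻¹ := by
            rw [← Real.rpow_add hx0, show θ + ε/8 - 1/2 + (-(1:ℝ)/2 - θ - ε/4) = -(1+ε/8) by ring]
        _ = ν^(1/2+θ+ε/4) * x^(-(1+ε/8)) := by
            rw [show -(1:ℝ)/2 - θ - ε/4 = -((1:ℝ)/2+θ+ε/4) by ring, Real.rpow_neg hν0.le,
              inv_inv]
            ring
    refine hmain.trans (le_min ?_ ?_)
    · calc x ^ (θ + ε/8 - 1/2) * min ((x/ν) ^ ((1:ℝ)/2 - ε/8)) ((x/ν) ^ (-(1:ℝ)/2 - θ - ε/4))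
          ≤ x ^ (θ + ε/8 - 1/2) * ((x/ν) ^ ((1:ℝ)/2 - ε/8)) :=
            mul_le_mul_of_nonneg_left (min_le_left _ _) (Real.rpow_nonneg hx0.le _)
        _ = ν^(ε/8-1/2) * x^θ := e1
    · calc x ^ (θ + ε/8 - 1/2) * min ((x/ν) ^ ((1:ℝ)/2 - ε/8)) ((x/ν) ^ (-(1:ℝ)/2 - θ - ε/4))
          ≤ x ^ (θ + ε/8 - 1/2) * ((x/ν) ^ (-(1:ℝ)/2 - θ - ε/4)) :=
            mul_le_mul_of_nonneg_left (min_le_right _ _) (Real.rpow_nonneg hx0.le _)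
        _ = ν^(1/2+θ+ε/4) * x^(-(1+ε/8)) := e2
        _ ≤ ν^(1/2+θ+ε/4) * x^(-(1+δ)) := by
            apply mul_le_mul_of_nonneg_left _ (Real.rpow_nonneg hν0.le _)
            apply Real.rpow_le_rpow_of_exponent_le hx1
            linarith
  -- the per-divisor decomposition
  set F : ℕ → ℤ → ℝ := fun g m => if (m ≠ 0 ∧ (g:ℤ) ∣ m + l) then U m else 0 with hF
  have hF0 : ∀ g m, 0 ≤ F g m := by
    intro g m
    rw [hF]
    simp only
    split
    · exact hU0 m
    · exact le_rfl
  have hTF : ∀ m, T m ≤ (1/(φ:ℝ)) * ∑ g ∈ n.divisors, (g:ℝ) * F g m := by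
    intro m
    have hsumnn : 0 ≤ ∑ g ∈ n.divisors, (g:ℝ) * F g m :=
      Finset.sum_nonneg fun g _ => mul_nonneg (by positivity) (hF0 g m)
    rw [hT]
    simp only
    split
    case isTrue h => positivity
    case isFalse hm =>
      have hR := ramanujan_bound n hn (m + l)
      have h1 : (‖lam m‖ / Real.sqrt (|m| : ℝ)) * ‖W ((m : ℝ) / (n : ℝ))‖ *
          ‖normRamanujanSum n (m + l)‖
          ≤ U m * ((∑ g ∈ n.divisors, if (g:ℤ) ∣ m + l then (g:ℝ) else 0) / (φ:ℝ)) :=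
        mul_le_mul (hTU m hm) hR (norm_nonneg _) (hU0 m)
      refine h1.trans (le_of_eq ?_)
      rw [eq_comm]
      calc (1/(φ:ℝ)) * ∑ g ∈ n.divisors, (g:ℝ) * F g m
          = (1/(φ:ℝ)) * ∑ g ∈ n.divisors,
              (if (g:ℤ) ∣ m + l then (g:ℝ) else 0) * U m := by
            congr 1
            apply Finset.sum_congr rfl
            intro g hg
            rw [hF]
            simp only
            by_cases hdvd : (g:ℤ) ∣ m + l
            · rw [if_pos hdvd, if_pos ⟨hm, hdvd⟩]
            · rw [if_neg hdvd, if_neg (by tauto), mul_zero, zero_mul]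
        _ = U m * ((∑ g ∈ n.divisors, if (g:ℤ) ∣ m + l then (g:ℝ) else 0) / (φ:ℝ)) := by
            rw [← Finset.sum_mul]
            ring
  -- summability and tsum bound for each divisor g
  have hFg : ∀ g ∈ n.divisors, Summable (F g) ∧
      (∑' m, F g m) ≤ ((2*(l:ℝ)+3) * ν^(θ+1/2+ε/8) + Z * ν^(1/2+θ+ε/4)) / g := by
    intro g hgdvd
    obtain ⟨hdvd, -⟩ := Nat.mem_divisors.mp hgdvd
    have hg : 0 < g := Nat.pos_of_dvd_of_pos hdvd hn
    have hgn : g ≤ n := Nat.le_of_dvd hn hdvd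
    have hg' : (0:ℝ) < g := by positivity
    set i : ℤ → ℤ := fun k => (g:ℤ)*k - l with hi
    have hgZ : (g:ℤ) ≠ 0 := by positivity
    have hinj : Function.Injective i := by
      intro a b hab
      rw [hi] at hab
      simp only at hab
      have h2 : (g:ℤ)*a = (g:ℤ)*b := by omega
      exact mul_left_cancel₀ hgZ h2
    have hrange : ∀ m : ℤ, m ∉ Set.range i → F g m = 0 := by
      intro m hm
      rw [hF]
      simp only
      rw [if_neg]
      rintro ⟨hm0, k, hk⟩
      apply hm
      refine ⟨k, ?_⟩
      rw [hi]
      simp only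
      omega
    set G1 : ℤ → ℝ := fun k => ν^(ε/8-1/2) * ν^θ *
        (if ((g:ℤ)*k - l ≠ 0 ∧ |(g:ℤ)*k - (l:ℤ)| ≤ (n:ℤ)) then (1:ℝ) else 0) with hG1
    set G2 : ℤ → ℝ := fun k => ν^(1/2+θ+ε/4) *
        (if ((g:ℤ)*k - l ≠ 0 ∧ (n:ℤ) < |(g:ℤ)*k - (l:ℤ)|) then
          |(((g:ℤ)*k - (l:ℤ) : ℤ) : ℝ)| ^ (-(1+δ)) else 0) with hG2
    obtain ⟨hmidsum, hmidbound⟩ := mid_bound l n g hg hgn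
    obtain ⟨htailsum, htailbound⟩ := hZ n g hg hgn
    have hG1summable : Summable G1 := hmidsum.mul_left _
    have hG2summable : Summable G2 := htailsum.mul_left _
    have hG10 : ∀ k, 0 ≤ G1 k := by
      intro k
      rw [hG1]
      simp only
      have : (0:ℝ) ≤ (if ((g:ℤ)*k - l ≠ 0 ∧ |(g:ℤ)*k - (l:ℤ)| ≤ (n:ℤ)) then (1:ℝ) else 0) := by
        split <;> norm_num
      positivity
    have hG20 : ∀ k, 0 ≤ G2 k := by
      intro k
      rw [hG2]
      simp only
      have : (0:ℝ) ≤ (if ((g:ℤ)*k - l ≠ 0 ∧ (n:ℤ) < |(g:ℤ)*k - (l:ℤ)|) then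
          |(((g:ℤ)*k - (l:ℤ) : ℤ) : ℝ)| ^ (-(1+δ)) else 0) := by
        split
        · exact Real.rpow_nonneg (abs_nonneg _) _
        · exact le_rfl
      positivity
    have hcomp : ∀ k : ℤ, F g (i k) ≤ G1 k + G2 k := by
      intro k
      have hdvd2 : (g:ℤ) ∣ i k + l := by
        refine ⟨k, ?_⟩
        rw [hi]
        simp only
        ring
      by_cases h0 : i k = 0
      · have : F g (i k) = 0 := by
          rw [hF]
          simp only
          rw [if_neg]
          tauto
        rw [this]
        exact add_nonneg (hG10 k) (hG20 k)
      · have hFval : F g (i k) = U (i k) := by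
          rw [hF]
          simp only
          rw [if_pos ⟨h0, hdvd2⟩]
        rw [hFval]
        have hik : i k = (g:ℤ)*k - l := by rw [hi]
        by_cases hcase : |(g:ℤ)*k - (l:ℤ)| ≤ (n:ℤ)
        · -- middle range
          have hG2z : G2 k = 0 := by
            rw [hG2]
            simp only
            rw [if_neg, mul_zero]
            rintro ⟨-, hlt⟩
            omega
          have hG1v : G1 k = ν^(ε/8-1/2) * ν^θ := by
            rw [hG1]
            simp only
            rw [if_pos ⟨by rw [← hik]; exact h0, hcase⟩, mul_one]
          have hxle : |((i k : ℤ) : ℝ)| ≤ ν := by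
            rw [hν]
            have h3 : ((|i k| : ℤ) : ℝ) ≤ ((n:ℤ):ℝ) := by
              exact_mod_cast (by rw [hik]; exact hcase : |i k| ≤ (n:ℤ))
            rw [Int.cast_abs] at h3
            exact_mod_cast h3
          calc U (i k) ≤ ν^(ε/8-1/2) * |((i k : ℤ) : ℝ)|^θ := min_le_left _ _
            _ ≤ ν^(ε/8-1/2) * ν^θ := by
                apply mul_le_mul_of_nonneg_left _ (Real.rpow_nonneg hν0.le _)
                exact Real.rpow_le_rpow (abs_nonneg _) hxle hθ
            _ = G1 k := hG1v.symm
            _ ≤ G1 k + G2 k := le_add_of_nonneg_right (hG20 k)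
        · -- tail range
          have hlt : (n:ℤ) < |(g:ℤ)*k - (l:ℤ)| := by omega
          have hG2v : G2 k = ν^(1/2+θ+ε/4) * |(((g:ℤ)*k - (l:ℤ) : ℤ) : ℝ)| ^ (-(1+δ)) := by
            rw [hG2]
            simp only
            rw [if_pos ⟨by rw [← hik]; exact h0, hlt⟩]
          calc U (i k) ≤ ν^(1/2+θ+ε/4) * |((i k : ℤ) : ℝ)|^(-(1+δ)) := min_le_right _ _
            _ = G2 k := by rw [hG2v, hik]
            _ ≤ G1 k + G2 k := le_add_of_nonneg_left (hG10 k)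
    have hFicomp : Summable (fun k => F g (i k)) := by
      apply Summable.of_nonneg_of_le (fun k => hF0 g (i k)) hcomp
      exact hG1summable.add hG2summable
    have hFsummable : Summable (F g) := (hinj.summable_iff hrange).mp hFicomp
    have htsum_eq : (∑' k : ℤ, F g (i k)) = ∑' m : ℤ, F g m := by
      apply hinj.tsum_eq
      intro m hm
      by_contra hnot
      exact hm (hrange m hnot)
    refine ⟨hFsummable, ?_⟩
    have hstep : (∑' m : ℤ, F g m) ≤ (∑' k, G1 k) + (∑' k, G2 k) := by
      rw [← htsum_eq, ← Summable.tsum_add hG1summable hG2summable]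
      exact Summable.tsum_le_tsum hcomp hFicomp (hG1summable.add hG2summable)
    have hG1t : (∑' k, G1 k) ≤ (2*(l:ℝ)+3) * ν^(θ+1/2+ε/8) / g := by
      rw [hG1, tsum_mul_left]
      calc ν^(ε/8-1/2) * ν^θ *
            (∑' k : ℤ, (if ((g:ℤ)*k - l ≠ 0 ∧ |(g:ℤ)*k - (l:ℤ)| ≤ (n:ℤ)) then (1:ℝ) else 0))
          ≤ ν^(ε/8-1/2) * ν^θ * ((2*(l:ℝ)+3) * n / g) := by
            apply mul_le_mul_of_nonneg_left hmidbound
            have := Real.rpow_nonneg hν0.le (ε/8-1/2)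
            have := Real.rpow_nonneg hν0.le θ
            positivity
        _ = (2*(l:ℝ)+3) * ν^(θ+1/2+ε/8) / g := by
            rw [← hν]
            have hcollect : ν^(ε/8-1/2) * ν^θ * ν^(1:ℝ) = ν^(θ+1/2+ε/8) := by
              rw [← Real.rpow_add hν0, ← Real.rpow_add hν0]
              congr 1
              ring
            calc ν^(ε/8-1/2) * ν^θ * ((2*(l:ℝ)+3) * ν / g)
                = (2*(l:ℝ)+3) * (ν^(ε/8-1/2) * ν^θ * ν^(1:ℝ)) / g := by
                  rw [Real.rpow_one]
                  ring
              _ = (2*(l:ℝ)+3) * ν^(θ+1/2+ε/8) / g := by rw [hcollect]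
    have hG2t : (∑' k, G2 k) ≤ Z * ν^(1/2+θ+ε/4) / g := by
      rw [hG2, tsum_mul_left]
      calc ν^(1/2+θ+ε/4) *
            (∑' k : ℤ, (if ((g:ℤ)*k - l ≠ 0 ∧ (n:ℤ) < |(g:ℤ)*k - (l:ℤ)|) then
              |(((g:ℤ)*k - (l:ℤ) : ℤ) : ℝ)| ^ (-(1+δ)) else 0))
          ≤ ν^(1/2+θ+ε/4) * (Z / g) :=
            mul_le_mul_of_nonneg_left htailbound (Real.rpow_nonneg hν0.le _)
        _ = Z * ν^(1/2+θ+ε/4) / g := by ring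
    calc (∑' m : ℤ, F g m) ≤ (∑' k, G1 k) + (∑' k, G2 k) := hstep
      _ ≤ (2*(l:ℝ)+3) * ν^(θ+1/2+ε/8) / g + Z * ν^(1/2+θ+ε/4) / g := add_le_add hG1t hG2t
      _ = ((2*(l:ℝ)+3) * ν^(θ+1/2+ε/8) + Z * ν^(1/2+θ+ε/4)) / g := by ring
  -- final assembly
  set E : ℝ := (2*(l:ℝ)+3) * ν^(θ+1/2+ε/8) + Z * ν^(1/2+θ+ε/4) with hE
  have hE0 : (0:ℝ) ≤ E := by
    rw [hE]
    have := Real.rpow_nonneg hν0.le (θ+1/2+ε/8)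
    have := Real.rpow_nonneg hν0.le (1/2+θ+ε/4)
    positivity
  set M : ℤ → ℝ := fun m => (1/(φ:ℝ)) * ∑ g ∈ n.divisors, (g:ℝ) * F g m with hM
  have hMsummable : Summable M := by
    apply Summable.mul_left
    apply summable_sum
    intro g hg
    exact ((hFg g hg).1.mul_left _)
  have hTsummable : Summable T := Summable.of_nonneg_of_le hT0 hTF hMsummable
  refine ⟨hTsummable, ?_⟩
  have htsumM : (∑' m, M m) = (1/(φ:ℝ)) * ∑ g ∈ n.divisors, (g:ℝ) * (∑' m, F g m) := by
    rw [hM, tsum_mul_left]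
    congr 1
    rw [Summable.tsum_finsetSum (fun g hg => ((hFg g hg).1.mul_left _))]
    apply Finset.sum_congr rfl
    intro g hg
    rw [tsum_mul_left]
  have hdivle : ∀ g ∈ n.divisors, (g:ℝ) * (∑' m, F g m) ≤ E := by
    intro g hg
    obtain ⟨hdvd, -⟩ := Nat.mem_divisors.mp hg
    have hgpos : 0 < g := Nat.pos_of_dvd_of_pos hdvd hn
    have hg' : (0:ℝ) < g := by positivity
    calc (g:ℝ) * (∑' m, F g m) ≤ (g:ℝ) * (E / g) := by
          apply mul_le_mul_of_nonneg_left ((hFg g hg).2) hg'.le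
      _ = E := by
          rw [mul_comm, div_mul_cancel₀ E hg'.ne']
  have hphibound : (τ:ℝ)/(φ:ℝ) ≤ (τ:ℝ)^2/ν := by
    rw [div_le_div_iff₀ hφ0' hν0]
    have hnle : ν ≤ (φ:ℝ) * (τ:ℝ) := by
      rw [hν, hφ, hτ]
      exact_mod_cast n_le_phi_mul_tau n hn
    calc (τ:ℝ) * ν ≤ (τ:ℝ) * ((φ:ℝ) * (τ:ℝ)) := mul_le_mul_of_nonneg_left hnle hτ0
      _ = (τ:ℝ)^2 * (φ:ℝ) := by ring
  have hτsq : (τ:ℝ)^2 ≤ Cτ^2 * ν^(3*ε/4) := by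
    have h1 : (τ:ℝ) ≤ Cτ * ν^(3*ε/8) := by
      rw [hτ, hν]
      exact hCτ n hn
    have h2 : (τ:ℝ)^2 ≤ (Cτ * ν^(3*ε/8))^2 := by
      apply pow_le_pow_left₀ hτ0 h1
    calc (τ:ℝ)^2 ≤ (Cτ * ν^(3*ε/8))^2 := h2
      _ = Cτ^2 * (ν^(3*ε/8) * ν^(3*ε/8)) := by ring
      _ = Cτ^2 * ν^(3*ε/4) := by
          rw [← Real.rpow_add hν0, show 3*ε/8 + 3*ε/8 = 3*ε/4 by ring]
  have hEE : E ≤ ((2*(l:ℝ)+3) + Z) * ν^(θ+1/2+ε/4) := by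
    rw [hE]
    have h1 : ν^(θ+1/2+ε/8) ≤ ν^(θ+1/2+ε/4) :=
      Real.rpow_le_rpow_of_exponent_le hν1 (by linarith)
    have h2 : ν^(1/2+θ+ε/4) = ν^(θ+1/2+ε/4) := by
      congr 1
      ring
    rw [h2]
    have := Real.rpow_nonneg hν0.le (θ+1/2+ε/4)
    nlinarith [hZ0.le]
  have hpow : ν^(3*ε/4) * ν⁻¹ * ν^(θ+1/2+ε/4) = ν^(-(1:ℝ)/2+θ+ε) := by
    rw [← Real.rpow_neg_one ν, ← Real.rpow_add hν0, ← Real.rpow_add hν0]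
    congr 1
    ring
  calc (∑' m, T m) ≤ (∑' m, M m) := Summable.tsum_le_tsum hTF hTsummable hMsummable
    _ = (1/(φ:ℝ)) * ∑ g ∈ n.divisors, (g:ℝ) * (∑' m, F g m) := htsumM
    _ ≤ (1/(φ:ℝ)) * ∑ _g ∈ n.divisors, E := by
        apply mul_le_mul_of_nonneg_left (Finset.sum_le_sum hdivle) (by positivity)
    _ = (τ:ℝ)/(φ:ℝ) * E := by
        rw [Finset.sum_const, nsmul_eq_mul, ← hτ]
        ring
    _ ≤ (τ:ℝ)^2/ν * E := mul_le_mul_of_nonneg_right hphibound hE0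
    _ ≤ (Cτ^2 * ν^(3*ε/4))/ν * (((2*(l:ℝ)+3) + Z) * ν^(θ+1/2+ε/4)) := by
        apply mul_le_mul _ hEE hE0 (by positivity)
        gcongr

    _ = (Cτ^2 * ((2*(l:ℝ)+3) + Z)) * (ν^(3*ε/4) * ν⁻¹ * ν^(θ+1/2+ε/4)) := by
        ring
    _ = (Cτ^2 * ((2*(l:ℝ)+3) + Z)) * ν^(-(1:ℝ)/2+θ+ε) := by rw [hpow]
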